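/- Let F be a finite set of cardinality N ≥ 2 and let P_θ, θ∈F, be probability measures on a measurable space 𝒳 dominated by a σ-finite measure μ. Let f:[0,∞)→ℝ be a differentiable convex function with f(1)=0 and define g(a) := f(N(1−a)) + (N−1)·f(Na/(N−1)). Then for every a ∈ [0, 1−1/N] and every probability measure Q on 𝒳: Σ_{θ∈F} D_f(P_θ||Q) ≥ g(a) + g'(a)·(r̄ − a), where r̄ is the uniform-prior Bayes testing risk; moreover g'(a) ≤ 0 on [0, 1−1/N], and consequently if g'(a) < 0 then r̄ ≥ a + (inf_Q Σ_{θ∈F} D_f(P_θ||Q) − g(a))/g'(a). -/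

import Mathlib

open MeasureTheory Real

/-- The `f`-divergence `D_f(P‖Q) = ∫ f(dP/dQ) dQ` (real-valued; meaningful when `P ≪ Q`
and the integrand is integrable, in which case it agrees with the usual definition;
otherwise the usual `D_f` is `+∞` and the lower bound is trivially true). -/
noncomputable def fDivR {X : Type*} [MeasurableSpace X] (f : ℝ → ℝ) (P Q : Measure X) : ℝ :=
  ∫ x, f ((P.rnDeriv Q x).toReal) ∂Q

/-- The uniform-prior Bayes testing risk `r̄ = inf_T (1/N) Σ_θ P_θ {T ≠ θ}`, the infimum
being over all measurable tests `T : X → F`. -/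
noncomputable def bayesRisk {X F : Type*} [MeasurableSpace X] [Fintype F]
    (P : F → Measure X) : ℝ :=
  ⨅ T : {T : X → F // ∀ θ, MeasurableSet {x | T x = θ}},
    (Fintype.card F : ℝ)⁻¹ * ∑ θ, (P θ {x | T.1 x ≠ θ}).toReal

/-- The function `g(a) = f(N(1-a)) + (N-1) f(Na/(N-1))`. -/
noncomputable def gFun (f : ℝ → ℝ) (N a : ℝ) : ℝ :=
  f (N * (1 - a)) + (N - 1) * f (N * a / (N - 1))

/-- The derivative of `g`: `g'(a) = N (f'(Na/(N-1)) - f'(N(1-a)))`, where `f'` is the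
(one-sided, at `0`) derivative of `f` on `[0,∞)`. -/
noncomputable def gDeriv (f : ℝ → ℝ) (N a : ℝ) : ℝ :=
  N * (derivWithin f (Set.Ici 0) (N * a / (N - 1)) - derivWithin f (Set.Ici 0) (N * (1 - a)))

/-- Tangent line bound for a convex, differentiable function on `[0,∞)`. -/
lemma tangent_le {f : ℝ → ℝ} (hf : ConvexOn ℝ (Set.Ici 0) f)
    (hd : DifferentiableOn ℝ f (Set.Ici 0)) {c u : ℝ} (hc : 0 ≤ c) (hu : 0 ≤ u) :
    f c + derivWithin f (Set.Ici 0) c * (u - c) ≤ f u := by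
  rcases lt_trichotomy c u with h | h | h
  · have h1 := hf.derivWithin_le_slope (Set.mem_Ici.mpr hc) (Set.mem_Ici.mpr hu) h (hd c hc)
    rw [slope_def_field] at h1
    have h2 := (le_div_iff₀ (by linarith)).mp h1
    linarith
  · subst h; simp
  · have h1 := hf.slope_le_derivWithin (Set.mem_Ici.mpr hu) (Set.mem_Ici.mpr hc) h (hd c hc)
    rw [slope_def_field] at h1
    have h2 := (div_le_iff₀ (by linarith)).mp h1
    linarith

/-- Lower bound on a set integral of `f ∘ dP/dQ` by the tangent line of `f` at `c`. -/
lemma setBound {X : Type*} [MeasurableSpace X] {P Q : Measure X} [IsFiniteMeasure P]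
    [IsProbabilityMeasure Q] (hPQ : P ≪ Q) {f : ℝ → ℝ}
    (hf : ConvexOn ℝ (Set.Ici 0) f) (hd : DifferentiableOn ℝ f (Set.Ici 0))
    (hInt : Integrable (fun x => f ((P.rnDeriv Q x).toReal)) Q)
    {s : Set X} (hs : MeasurableSet s) {c : ℝ} (hc : 0 ≤ c) :
    f c * (Q s).toReal + derivWithin f (Set.Ici 0) c * ((P s).toReal - c * (Q s).toReal)
      ≤ ∫ x in s, f ((P.rnDeriv Q x).toReal) ∂Q := by
  set d := derivWithin f (Set.Ici 0) c with hdd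
  have hr : Integrable (fun x => (P.rnDeriv Q x).toReal) Q := Measure.integrable_toReal_rnDeriv
  have h1 : Integrable (fun x => f c + d * ((P.rnDeriv Q x).toReal - c)) Q :=
    (integrable_const _).add ((hr.sub (integrable_const c)).const_mul d)
  have h2 : ∫ x in s, (f c + d * ((P.rnDeriv Q x).toReal - c)) ∂Q
      = f c * (Q s).toReal + d * ((P s).toReal - c * (Q s).toReal) := by
    have e1 : ∫ x in s, (f c + d * ((P.rnDeriv Q x).toReal - c)) ∂Q
        = ∫ x in s, ((f c - d * c) + d * (P.rnDeriv Q x).toReal) ∂Q :=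
      integral_congr_ae (Filter.Eventually.of_forall fun x => by ring)
    rw [e1, integral_add (integrable_const _) (hr.const_mul d).restrict,
      integral_const, integral_const_mul d, Measure.setIntegral_toReal_rnDeriv hPQ s]
    simp only [measureReal_def, Measure.restrict_apply_univ, smul_eq_mul]
    ring
  rw [← h2]
  exact setIntegral_mono_on h1.integrableOn hInt.integrableOn hs
    (fun x _ => tangent_le hf hd hc ENNReal.toReal_nonneg)

/-- Corollary 1: tangent-line lower bound `Σ_θ D_f(P_θ‖Q) ≥ g(a) + g'(a)(r̄-a)`
for `a ∈ [0, 1-1/N]`, `g' ≤ 0` there, and the resulting explicit lower bound on `r̄`. -/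
theorem statement2 {X F : Type*} [MeasurableSpace X] [Fintype F] [Nonempty F]
    (μ : Measure X) [SigmaFinite μ]
    (P : F → Measure X) (hPdom : ∀ θ, P θ ≪ μ) (hPprob : ∀ θ, IsProbabilityMeasure (P θ))
    (f : ℝ → ℝ) (hf : ConvexOn ℝ (Set.Ici 0) f) (hf1 : f 1 = 0)
    (hf_diff : DifferentiableOn ℝ f (Set.Ici 0))
    (N : ℝ) (hN : N = Fintype.card F) (hN2 : 2 ≤ N)
    (a : ℝ) (ha0 : 0 ≤ a) (ha1 : a ≤ 1 - 1 / N)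
    (Q : Measure X) [IsProbabilityMeasure Q]
    (hAC : ∀ θ, P θ ≪ Q)
    (hInt : ∀ θ, Integrable (fun x => f ((P θ).rnDeriv Q x).toReal) Q) :
    (gFun f N a + gDeriv f N a * (bayesRisk P - a) ≤ ∑ θ, fDivR f (P θ) Q) ∧
    gDeriv f N a ≤ 0 ∧
    (gDeriv f N a < 0 →
      a + (∑ θ, fDivR f (P θ) Q - gFun f N a) / gDeriv f N a ≤ bayesRisk P) := by
  have hN0 : (0:ℝ) < N := by linarith
  have hN1 : (0:ℝ) < N - 1 := by linarith
  have hNinv : N * N⁻¹ = 1 := mul_inv_cancel₀ hN0.ne'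
  have hNdiv : N * (1 / N) = 1 := by rw [mul_one_div, div_self hN0.ne']
  set c₁ := N * (1 - a) with hc₁def
  set c₂ := N * a / (N - 1) with hc₂def
  set d₁ := derivWithin f (Set.Ici 0) c₁ with hd₁def
  set d₂ := derivWithin f (Set.Ici 0) c₂ with hd₂def
  have hgF : gFun f N a = f c₁ + (N - 1) * f c₂ := by rw [hc₁def, hc₂def]; rfl
  have hgD : gDeriv f N a = N * (d₂ - d₁) := by
    rw [hd₁def, hd₂def, hc₁def, hc₂def]; rfl
  have ha1' : N * a ≤ N - 1 := by
    have h := mul_le_mul_of_nonneg_left ha1 hN0.le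
    nlinarith
  have hc₂0 : 0 ≤ c₂ := div_nonneg (by nlinarith) hN1.le
  have hc₂1 : c₂ ≤ 1 := by rw [hc₂def]; exact (div_le_one hN1).mpr (by linarith)
  have hc₁1 : (1:ℝ) ≤ c₁ := by
    rw [hc₁def]; nlinarith
  have hc₁0 : 0 ≤ c₁ := by linarith
  have hc₂mul : c₂ * (N - 1) = N * a := by rw [hc₂def]; exact div_mul_cancel₀ _ hN1.ne'
  -- g' ≤ 0
  clear_value c₁ c₂ d₁ d₂
  have hd21 : d₂ ≤ d₁ := by
    rw [hd₁def, hd₂def]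
    exact hf.monotoneOn_derivWithin hf_diff (Set.mem_Ici.mpr hc₂0) (Set.mem_Ici.mpr hc₁0)
      (hc₂1.trans hc₁1)
  have hg'le : gDeriv f N a ≤ 0 := by
    rw [hgD]; exact mul_nonpos_of_nonneg_of_nonpos hN0.le (by linarith)
  -- per-test bound
  have key : ∀ T : {T : X → F // ∀ θ, MeasurableSet {x | T x = θ}},
      f c₁ + (N - 1) * f c₂ + N * (d₂ - d₁) *
          ((N⁻¹ * ∑ θ, ((P θ) {x | T.1 x ≠ θ}).toReal) - a)
        ≤ ∑ θ, fDivR f (P θ) Q := by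
    intro T
    set E : F → Set X := fun θ => {x | T.1 x = θ} with hE
    have hEm : ∀ θ, MeasurableSet (E θ) := T.2
    have hcompl : ∀ θ : F, {x | T.1 x ≠ θ} = (E θ)ᶜ := fun θ => rfl
    set q : F → ℝ := fun θ => (Q (E θ)).toReal with hq
    set e : F → ℝ := fun θ => ((P θ) ((E θ)ᶜ)).toReal with he
    have hqc : ∀ θ, (Q ((E θ)ᶜ)).toReal = 1 - q θ := by
      intro θ
      rw [measure_compl (hEm θ) (measure_ne_top _ _), measure_univ,
        ENNReal.toReal_sub_of_le prob_le_one ENNReal.one_ne_top, ENNReal.toReal_one]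
    have hpe : ∀ θ, ((P θ) (E θ)).toReal = 1 - e θ := by
      intro θ
      haveI := hPprob θ
      have h := measure_compl (μ := P θ) (hEm θ).compl (measure_ne_top (P θ) _)
      rw [compl_compl, measure_univ] at h
      rw [h, ENNReal.toReal_sub_of_le prob_le_one ENNReal.one_ne_top, ENNReal.toReal_one]
    have hqsum : ∑ θ, q θ = 1 := by
      have h1 : ∀ θ : F, E θ = T.1 ⁻¹' {θ} := fun θ => rfl
      have h2 : (∑ θ, Q (T.1 ⁻¹' {θ})) = Q (T.1 ⁻¹' (Finset.univ : Finset F)) :=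
        sum_measure_preimage_singleton Finset.univ (fun θ _ => T.2 θ)
      simp only [Finset.coe_univ, Set.preimage_univ, measure_univ] at h2
      rw [hq]
      simp_rw [h1]
      rw [← ENNReal.toReal_sum (fun θ _ => measure_ne_top _ _), h2, ENNReal.toReal_one]
    have hbound : ∀ θ, f c₁ * q θ + d₁ * ((1 - e θ) - c₁ * q θ)
        + (f c₂ * (1 - q θ) + d₂ * (e θ - c₂ * (1 - q θ)))
        ≤ fDivR f (P θ) Q := by
      intro θ
      haveI := hPprob θ
      have h1 := setBound (hAC θ) hf hf_diff (hInt θ) (hEm θ) hc₁0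
      have h2 := setBound (hAC θ) hf hf_diff (hInt θ) (hEm θ).compl hc₂0
      rw [← hd₁def] at h1
      rw [← hd₂def] at h2
      have h3 : fDivR f (P θ) Q = (∫ x in E θ, f ((P θ).rnDeriv Q x).toReal ∂Q)
          + ∫ x in (E θ)ᶜ, f ((P θ).rnDeriv Q x).toReal ∂Q :=
        (integral_add_compl (hEm θ) (hInt θ)).symm
      rw [h3]
      rw [hpe θ] at h1
      rw [hqc θ] at h2
      exact add_le_add h1 h2
    have hsum : ∑ θ, (f c₁ * q θ + d₁ * ((1 - e θ) - c₁ * q θ)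
          + (f c₂ * (1 - q θ) + d₂ * (e θ - c₂ * (1 - q θ))))
        = (f c₁ - d₁ * c₁ - f c₂ + d₂ * c₂) * (∑ θ, q θ) + (d₂ - d₁) * (∑ θ, e θ)
          + (Fintype.card F : ℝ) * (d₁ + f c₂ - d₂ * c₂) := by
      rw [Finset.mul_sum, Finset.mul_sum, ← Finset.sum_add_distrib]
      rw [show (Fintype.card F : ℝ) * (d₁ + f c₂ - d₂ * c₂)
          = ∑ _θ : F, (d₁ + f c₂ - d₂ * c₂) by
        rw [Finset.sum_const, Finset.card_univ, nsmul_eq_mul]]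
      rw [← Finset.sum_add_distrib]
      exact Finset.sum_congr rfl fun θ _ => by ring
    have heq : f c₁ + (N - 1) * f c₂ + N * (d₂ - d₁) * ((N⁻¹ * ∑ θ, e θ) - a)
        = (f c₁ - d₁ * c₁ - f c₂ + d₂ * c₂) * 1 + (d₂ - d₁) * (∑ θ, e θ)
          + N * (d₁ + f c₂ - d₂ * c₂) := by
      linear_combination (d₂ - d₁) * (∑ θ, e θ) * hNinv + d₂ * hc₂mul + d₁ * hc₁def
    have hfinal : ∑ θ, ((P θ) {x | T.1 x ≠ θ}).toReal = ∑ θ, e θ :=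
      Finset.sum_congr rfl fun θ _ => by rw [hcompl θ]
    calc f c₁ + (N - 1) * f c₂ + N * (d₂ - d₁) *
            ((N⁻¹ * ∑ θ, ((P θ) {x | T.1 x ≠ θ}).toReal) - a)
        = (f c₁ - d₁ * c₁ - f c₂ + d₂ * c₂) * (∑ θ, q θ) + (d₂ - d₁) * (∑ θ, e θ)
          + (Fintype.card F : ℝ) * (d₁ + f c₂ - d₂ * c₂) := by
          rw [hfinal, hqsum, heq, ← hN]
      _ = ∑ θ, (f c₁ * q θ + d₁ * ((1 - e θ) - c₁ * q θ)
          + (f c₂ * (1 - q θ) + d₂ * (e θ - c₂ * (1 - q θ)))) := hsum.symm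
      _ ≤ ∑ θ, fDivR f (P θ) Q := Finset.sum_le_sum fun θ _ => hbound θ
  -- nonemptiness of the test type
  haveI hne : Nonempty {T : X → F // ∀ θ, MeasurableSet {x | T x = θ}} := by
    refine ⟨⟨fun _ => Classical.arbitrary F, fun θ => ?_⟩⟩
    by_cases h : Classical.arbitrary F = θ <;> simp [h]
  -- part 1
  have part1 : gFun f N a + gDeriv f N a * (bayesRisk P - a) ≤ ∑ θ, fDivR f (P θ) Q := by
    rw [hgF, hgD]
    refine le_of_forall_pos_le_add fun ε hε => ?_
    have hg'le' : N * (d₂ - d₁) ≤ 0 := by rw [← hgD]; exact hg'le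
    rcases eq_or_lt_of_le hg'le' with h0 | hneg
    · obtain ⟨T⟩ := hne
      have hk := key T
      rw [h0] at hk ⊢
      linarith
    · set δ := ε / (-(N * (d₂ - d₁))) with hδdef
      have hδpos : 0 < δ := div_pos hε (by linarith)
      have hlt : (⨅ T : {T : X → F // ∀ θ, MeasurableSet {x | T x = θ}},
          (Fintype.card F : ℝ)⁻¹ * ∑ θ, ((P θ) {x | T.1 x ≠ θ}).toReal)
          < bayesRisk P + δ := by
        have : bayesRisk P < bayesRisk P + δ := by linarith
        exact this
      obtain ⟨T, hT⟩ := exists_lt_of_ciInf_lt hlt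
      rw [← hN] at hT
      have hk := key T
      have hprod := mul_lt_mul_of_neg_left hT hneg
      have hδε : -(N * (d₂ - d₁)) * δ = ε := by
        rw [hδdef]
        field_simp
        exact div_self (by intro h; rw [h, mul_zero] at hneg; exact lt_irrefl _ hneg)
      nlinarith [hk, hprod, hδε]
  refine ⟨part1, hg'le, fun hneg => ?_⟩
  have h2 : (∑ θ, fDivR f (P θ) Q - gFun f N a) / gDeriv f N a ≤ bayesRisk P - a := by
    rw [div_le_iff_of_neg hneg]
    nlinarith [part1]
  linarith
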